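/- For every twice continuously differentiable, compactly supported function f : ℝ³ → ℂ and every x ∈ ℝ³, one has |f(x)| ≤ (1/4π) ∫_{ℝ³} |D²f(y)|/|x−y| dy, where |D²f(y)| denotes the operator norm of the Hessian matrix of f at y. In particular ‖f‖_{L^∞(ℝ³)} ≤ (1/4π) ‖ |D²f| ‖_K. -/

import Mathlib

set_option autoImplicit false
set_option maxHeartbeats 1000000

open MeasureTheory ENNReal Real
open Set Metric

noncomputable section

/-- `ℝ³` as a Euclidean space. -/
abbrev R3 : Type := EuclideanSpace ℝ (Fin 3)

/-- The (global) Kato norm of a function `V` on `ℝ³`: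
`‖V‖_K = sup_y ∫ |V(x)| / |x - y| dx`. -/
def katoNorm {E : Type*} [NormedAddCommGroup E] (V : R3 → E) : ℝ≥0∞ :=
  ⨆ y : R3, ∫⁻ x : R3, (‖V x‖₊ : ℝ≥0∞) / (‖x - y‖₊ : ℝ≥0∞)

section Aux

lemma ofReal_norm_eq_coe_nnnorm {E : Type*} [SeminormedAddCommGroup E] (a : E) :
    ENNReal.ofReal ‖a‖ = (‖a‖₊ : ℝ≥0∞) := by
  rw [← coe_nnnorm a, ENNReal.ofReal_coe_nnreal]

/-- Along each ray from `x`, `|f x|` is bounded by `∫_0^∞ r ‖D²f(x + rω)‖ dr`. -/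
private lemma ray_bound (f : R3 → ℂ) (hf : ContDiff ℝ 2 f) (hsupp : HasCompactSupport f)
    (x ω : R3) (hω : ‖ω‖ = 1) :
    ENNReal.ofReal ‖f x‖ ≤
      ∫⁻ r in Set.Ioi (0:ℝ), ENNReal.ofReal (r * ‖fderiv ℝ (fderiv ℝ f) (x + r • ω)‖) := by
  set c : ℝ → R3 := fun r => x + r • ω with hc
  have hcderiv : ∀ r : ℝ, HasDerivAt c ω r := by
    intro r; simpa [hc] using ((hasDerivAt_id r).smul_const ω).const_add x
  have hdf : Differentiable ℝ f := hf.differentiable (by norm_num)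
  have hdf1 : ContDiff ℝ 1 (fderiv ℝ f) := hf.fderiv_right (by norm_num)
  have hddf : Differentiable ℝ (fderiv ℝ f) := hdf1.differentiable one_ne_zero
  have hg : ∀ r : ℝ, HasDerivAt (fun r => f (c r)) ((fderiv ℝ f (c r)) ω) r := fun r =>
    (hdf (c r)).hasFDerivAt.comp_hasDerivAt r (hcderiv r)
  have hFω : ∀ r : ℝ, HasDerivAt (fun r => fderiv ℝ f (c r) ω)
      ((fderiv ℝ (fderiv ℝ f) (c r) ω) ω) r := fun r => by
    simpa using (((hddf (c r)).hasFDerivAt.comp_hasDerivAt r (hcderiv r)).clm_apply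
      (hasDerivAt_const r ω))
  have hh : ∀ r : ℝ, HasDerivAt (fun r => f (c r) - r • (fderiv ℝ f (c r) ω))
      (-(r • ((fderiv ℝ (fderiv ℝ f) (c r) ω) ω))) r := by
    intro r
    have h2 : HasDerivAt (fun r : ℝ => r • (fderiv ℝ f (c r) ω))
        ((fderiv ℝ f (c r) ω) + r • ((fderiv ℝ (fderiv ℝ f) (c r) ω) ω)) r := by
      exact ((hasDerivAt_id r).smul (hFω r)).congr_deriv (by simp [add_comm])
    exact ((hg r).sub h2).congr_deriv (by simp)
  obtain ⟨M, hM⟩ := hsupp.isBounded.subset_closedBall 0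
  set R : ℝ := |M| + ‖x‖ + 1 with hR
  have hR0 : (0:ℝ) < R := by positivity
  have hout : ∀ r : ℝ, R ≤ r → c r ∉ tsupport f := by
    intro r hr hmem
    have := hM hmem
    simp only [mem_closedBall, dist_zero_right] at this
    have h2 : ‖r • ω‖ ≤ ‖x + r • ω‖ + ‖x‖ := by
      simpa [add_sub_cancel_left] using norm_sub_le (x + r • ω) x
    rw [norm_smul, hω, mul_one, Real.norm_eq_abs, abs_of_nonneg (le_trans hR0.le hr)] at h2
    have hcr : ‖c r‖ ≤ M := this
    nlinarith [le_abs_self M]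
  have hfR : f (c R) = 0 := image_eq_zero_of_notMem_tsupport (hout R le_rfl)
  have hdfR : fderiv ℝ f (c R) = 0 := by
    have : c R ∉ tsupport f := hout R le_rfl
    by_contra h
    exact this (support_fderiv_subset ℝ (by simpa [Function.mem_support] using h))
  have hcont2 : Continuous (fderiv ℝ (fderiv ℝ f)) := hdf1.continuous_fderiv one_ne_zero
  have hcontInt : Continuous (fun r : ℝ => r • ((fderiv ℝ (fderiv ℝ f) (c r) ω) ω)) := by
    fun_prop
  have hFTC := intervalIntegral.integral_eq_sub_of_hasDerivAt
    (f := fun r => f (c r) - r • (fderiv ℝ f (c r) ω)) (fun r _ => hh r)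
    ((hcontInt.neg).intervalIntegrable 0 R)
  have hfx : f x = ∫ r in (0:ℝ)..R, r • ((fderiv ℝ (fderiv ℝ f) (c r) ω) ω) := by
    have : (∫ r in (0:ℝ)..R, -(r • ((fderiv ℝ (fderiv ℝ f) (c r) ω) ω)))
        = (f (c R) - R • (fderiv ℝ f (c R) ω)) - (f (c 0) - (0:ℝ) • (fderiv ℝ f (c 0) ω)) :=
      hFTC
    rw [intervalIntegral.integral_neg] at this
    have hc0 : c 0 = x := by simp [hc]
    rw [hfR, hdfR, hc0] at this
    simp at this
    simpa [Complex.real_smul] using this.symm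
  have hb : ∀ r ∈ Set.Icc (0:ℝ) R, ‖r • ((fderiv ℝ (fderiv ℝ f) (c r) ω) ω)‖ ≤
      r * ‖fderiv ℝ (fderiv ℝ f) (c r)‖ := by
    intro r hr
    rw [norm_smul, Real.norm_eq_abs, abs_of_nonneg hr.1]
    refine mul_le_mul_of_nonneg_left ?_ hr.1
    calc ‖(fderiv ℝ (fderiv ℝ f) (c r) ω) ω‖ ≤ ‖fderiv ℝ (fderiv ℝ f) (c r) ω‖ * ‖ω‖ :=
          ContinuousLinearMap.le_opNorm _ _
      _ ≤ ‖fderiv ℝ (fderiv ℝ f) (c r)‖ * ‖ω‖ * ‖ω‖ :=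
          mul_le_mul_of_nonneg_right (ContinuousLinearMap.le_opNorm _ _) (norm_nonneg _)
      _ = ‖fderiv ℝ (fderiv ℝ f) (c r)‖ := by rw [hω]; ring
  have hcontN : Continuous (fun r : ℝ => r * ‖fderiv ℝ (fderiv ℝ f) (c r)‖) :=
    continuous_id.mul (Continuous.norm (E := R3 →L[ℝ] R3 →L[ℝ] ℂ) (hcont2.comp (by fun_prop)))
  have hnorm : ‖f x‖ ≤ ∫ r in (0:ℝ)..R, r * ‖fderiv ℝ (fderiv ℝ f) (c r)‖ := by
    rw [hfx]
    refine (intervalIntegral.norm_integral_le_integral_norm hR0.le).trans ?_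
    refine intervalIntegral.integral_mono_on hR0.le ?_ (hcontN.intervalIntegrable 0 R) ?_
    · exact (hcontInt.norm).intervalIntegrable 0 R
    · exact hb
  refine le_trans (ENNReal.ofReal_le_ofReal hnorm) ?_
  rw [intervalIntegral.integral_of_le hR0.le,
    ofReal_integral_eq_lintegral_ofReal (hcontN.integrableOn_Ioc)
      (Filter.eventually_of_mem (ae_restrict_mem measurableSet_Ioc)
        (fun r hr => mul_nonneg hr.1.le (norm_nonneg (fderiv ℝ (fderiv ℝ f) (c r)))))]
  exact lintegral_mono_set Set.Ioc_subset_Ioi_self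

/-- Polar decomposition of the potential integral. -/
private lemma sphere_decomp {E : Type*} [NormedAddCommGroup E] (V : R3 → E)
    (hV : Continuous V) (x : R3) :
    ∫⁻ y : R3, (‖V y‖₊ : ℝ≥0∞) / (‖x - y‖₊ : ℝ≥0∞) =
      ∫⁻ ω : sphere (0:R3) 1, (∫⁻ r in Set.Ioi (0:ℝ),
        ENNReal.ofReal (r * ‖V (x + r • (ω : R3))‖)) ∂(volume : Measure R3).toSphere := by
  have hdim : Module.finrank ℝ R3 = 3 := finrank_euclideanSpace_fin
  have h1 : ∫⁻ y : R3, (‖V y‖₊ : ℝ≥0∞) / (‖x - y‖₊ : ℝ≥0∞)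
      = ∫⁻ z : R3, (‖V (x + z)‖₊ : ℝ≥0∞) / (‖z‖₊ : ℝ≥0∞) := by
    rw [← lintegral_add_left_eq_self (fun y : R3 => (‖V y‖₊ : ℝ≥0∞) / (‖x - y‖₊ : ℝ≥0∞)) x]
    refine lintegral_congr fun z => ?_
    congr 2
    rw [show x - (x + z) = -z by abel, nnnorm_neg]
  rw [h1]
  have h2 : ∫⁻ z : R3, (‖V (x + z)‖₊ : ℝ≥0∞) / (‖z‖₊ : ℝ≥0∞)
      = ∫⁻ z in ({0}ᶜ : Set R3), (‖V (x + z)‖₊ : ℝ≥0∞) / (‖z‖₊ : ℝ≥0∞) := by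
    rw [MeasureTheory.restrict_compl_singleton]
  rw [h2, ← lintegral_subtype_comap (MeasurableSet.singleton (0:R3)).compl]
  set F : sphere (0:R3) 1 × Ioi (0:ℝ) → ℝ≥0∞ :=
    fun p => (‖V (x + (p.2 : ℝ) • (p.1 : R3))‖₊ : ℝ≥0∞) / ENNReal.ofReal (p.2 : ℝ) with hF
  have hFmeas : Measurable F := by
    apply Measurable.div
    · refine (ENNReal.continuous_coe.comp ?_).measurable
      exact Continuous.nnnorm (hV.comp (by fun_prop))
    · exact ENNReal.measurable_ofReal.comp (by fun_prop)
  have h3 : ∫⁻ z : ({0}ᶜ : Set R3), (‖V (x + (z:R3))‖₊ : ℝ≥0∞) / (‖(z:R3)‖₊ : ℝ≥0∞)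
        ∂((volume : Measure R3).comap Subtype.val)
      = ∫⁻ p, F p ∂((volume : Measure R3).toSphere.prod
          (Measure.volumeIoiPow (Module.finrank ℝ R3 - 1))) := by
    rw [← (volume : Measure R3).measurePreserving_homeomorphUnitSphereProd.lintegral_comp hFmeas]
    refine lintegral_congr fun z => ?_
    have hz : (z : R3) ≠ 0 := z.2
    have hnz : ‖(z:R3)‖ ≠ 0 := norm_ne_zero_iff.mpr hz
    simp only [hF, homeomorphUnitSphereProd_apply_fst_coe, homeomorphUnitSphereProd_apply_snd_coe,
      smul_inv_smul₀ hnz, smul_smul, mul_inv_cancel₀ hnz, one_smul]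
    rw [ofReal_norm_eq_coe_nnnorm]
  rw [h3, lintegral_prod _ hFmeas.aemeasurable]
  refine lintegral_congr fun ω => ?_
  rw [hdim]
  show ∫⁻ r : Ioi (0:ℝ), F (ω, r) ∂(Measure.volumeIoiPow 2) = _
  rw [Measure.volumeIoiPow, lintegral_withDensity_eq_lintegral_mul _
      (by exact (measurable_subtype_coe.pow_const 2).ennreal_ofReal)
      (by exact hFmeas.comp measurable_prodMk_left)]
  have h4 : ∀ a : Ioi (0:ℝ), ((fun r : Ioi (0:ℝ) => ENNReal.ofReal ((r:ℝ) ^ 2)) *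
      fun r : Ioi (0:ℝ) => F (ω, r)) a = (fun t : ℝ => ENNReal.ofReal (t ^ 2) *
      ((‖V (x + t • (ω:R3))‖₊ : ℝ≥0∞) / ENNReal.ofReal t)) (a : ℝ) := fun a => rfl
  rw [lintegral_congr h4]
  rw [lintegral_subtype_comap measurableSet_Ioi (fun t : ℝ => ENNReal.ofReal (t ^ 2) *
      ((‖V (x + t • (ω:R3))‖₊ : ℝ≥0∞) / ENNReal.ofReal t))]
  refine setLIntegral_congr_fun measurableSet_Ioi (fun r hr => ?_)
  have hr0 : (0:ℝ) < r := hr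
  rw [← ofReal_norm_eq_coe_nnnorm, ENNReal.ofReal_mul hr0.le, pow_two,
    ENNReal.ofReal_mul hr0.le, mul_assoc, ENNReal.mul_div_cancel (by simpa using hr0)
      ENNReal.ofReal_ne_top]

/-- The total mass of `volume.toSphere` on `ℝ³` is `4π`. -/
private lemma sphere_univ_eq : (volume : Measure R3).toSphere Set.univ = ENNReal.ofReal (4 * π) := by
  rw [Measure.toSphere_apply_univ, finrank_euclideanSpace_fin, EuclideanSpace.volume_ball]
  have h5 : Real.Gamma ((Fintype.card (Fin 3) : ℝ) / 2 + 1) = 3 / 4 * Real.sqrt π := by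
    have h12 : Real.Gamma (1/2 : ℝ) = Real.sqrt π := Real.Gamma_one_half_eq
    have h32 : Real.Gamma (3/2 : ℝ) = 1 / 2 * Real.sqrt π := by
      have := Real.Gamma_add_one (s := (1/2 : ℝ)) (by norm_num)
      rw [show (1:ℝ)/2 + 1 = 3/2 by norm_num] at this
      rw [this, h12]
    have := Real.Gamma_add_one (s := (3/2 : ℝ)) (by norm_num)
    rw [show (3:ℝ)/2 + 1 = 5/2 by norm_num] at this
    have hc : ((Fintype.card (Fin 3) : ℝ) / 2 + 1) = 5/2 := by
      simp [Fintype.card_fin]; norm_num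
    rw [hc, this, h32]; ring
  rw [h5, Fintype.card_fin]
  have hsq : Real.sqrt π ^ 3 = π * Real.sqrt π := by
    have h : Real.sqrt π * Real.sqrt π = π := Real.mul_self_sqrt pi_pos.le
    rw [pow_succ, pow_two, h]
  have hs0 : Real.sqrt π > 0 := Real.sqrt_pos.mpr pi_pos
  have : Real.sqrt π ^ 3 / (3 / 4 * Real.sqrt π) = 4 / 3 * π := by
    rw [hsq]; field_simp
  rw [this]
  rw [ENNReal.ofReal_one, one_pow, one_mul,
    show ((3:ℕ) : ℝ≥0∞) = ENNReal.ofReal (3:ℝ) by norm_num,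
    ← ENNReal.ofReal_mul (by norm_num)]
  congr 1
  ring

/-- A uniform bound for the radial integrals. -/
private lemma radial_bound (V : R3 → (R3 →L[ℝ] (R3 →L[ℝ] ℂ))) (hV : Continuous V)
    (hVs : HasCompactSupport V) (x : R3) :
    ∃ B : ℝ≥0∞, B < ⊤ ∧ ∀ ω : R3, ‖ω‖ = 1 →
      ∫⁻ r in Set.Ioi (0:ℝ), ENNReal.ofReal (r * ‖V (x + r • ω)‖) ≤ B := by
  have hCex : ∃ C, ∀ z, ‖V z‖ ≤ C :=
    HasCompactSupport.exists_bound_of_continuous (E := R3 →L[ℝ] (R3 →L[ℝ] ℂ)) hVs hV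
  obtain ⟨C, hC⟩ := hCex
  obtain ⟨M, hM⟩ := hVs.isBounded.subset_closedBall 0
  set R : ℝ := |M| + ‖x‖ + 1 with hR
  have hR0 : (0:ℝ) < R := by positivity
  refine ⟨ENNReal.ofReal (R * |C|) * volume (Set.Ioc (0:ℝ) R), ?_, fun ω hω => ?_⟩
  · apply ENNReal.mul_lt_top ENNReal.ofReal_lt_top
    simp [Real.volume_Ioc]
  have hbound : ∀ r ∈ Set.Ioi (0:ℝ), ENNReal.ofReal (r * ‖V (x + r • ω)‖) ≤
      (Set.Ioc (0:ℝ) R).indicator (fun _ => ENNReal.ofReal (R * |C|)) r := by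
    intro r hr
    rcases le_or_gt r R with h | h
    · have hmem : r ∈ Set.Ioc (0:ℝ) R := ⟨hr, h⟩
      rw [Set.indicator_of_mem hmem]
      refine ENNReal.ofReal_le_ofReal (mul_le_mul h ((hC _).trans (le_abs_self C))
        (norm_nonneg (V (x + r • ω))) hR0.le)
    · have hout : V (x + r • ω) = 0 := by
        have hne : x + r • ω ∉ tsupport V := by
          intro hmem
          have h1 := hM hmem
          simp only [mem_closedBall, dist_zero_right] at h1
          have h2 : ‖r • ω‖ ≤ ‖x + r • ω‖ + ‖x‖ := by
            simpa [add_sub_cancel_left] using norm_sub_le (x + r • ω) x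
          rw [norm_smul, hω, mul_one, Real.norm_eq_abs,
            abs_of_nonneg (le_of_lt (lt_trans hR0 h))] at h2
          nlinarith [le_abs_self M]
        exact image_eq_zero_of_notMem_tsupport hne
      have hz : ‖(0 : R3 →L[ℝ] (R3 →L[ℝ] ℂ))‖ = (0:ℝ) := ContinuousLinearMap.opNorm_zero
      rw [hout, hz, mul_zero]
      simp
  calc ∫⁻ r in Set.Ioi (0:ℝ), ENNReal.ofReal (r * ‖V (x + r • ω)‖)
      ≤ ∫⁻ r in Set.Ioi (0:ℝ), (Set.Ioc (0:ℝ) R).indicator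
          (fun _ => ENNReal.ofReal (R * |C|)) r :=
        setLIntegral_mono' measurableSet_Ioi hbound
    _ ≤ ∫⁻ r, (Set.Ioc (0:ℝ) R).indicator (fun _ => ENNReal.ofReal (R * |C|)) r :=
        setLIntegral_le_lintegral _ _
    _ = ENNReal.ofReal (R * |C|) * volume (Set.Ioc (0:ℝ) R) := by
        rw [lintegral_indicator measurableSet_Ioc]; simp

end Aux

theorem linfty_le_kato_of_D2 (f : R3 → ℂ) (hf : ContDiff ℝ 2 f)
    (hsupp : HasCompactSupport f) :
    (∀ x : R3, ‖f x‖ ≤ (1 / (4 * π)) * ∫ y : R3, ‖fderiv ℝ (fderiv ℝ f) y‖ / ‖x - y‖) ∧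
    (∀ x : R3, (‖f x‖₊ : ℝ≥0∞) ≤
      (ENNReal.ofReal (4 * π))⁻¹ * katoNorm (fun y => fderiv ℝ (fderiv ℝ f) y)) := by
  have hdf1 : ContDiff ℝ 1 (fderiv ℝ f) := hf.fderiv_right (by norm_num)
  have hV : Continuous (fderiv ℝ (fderiv ℝ f)) := hdf1.continuous_fderiv one_ne_zero
  have hVs : HasCompactSupport (fderiv ℝ (fderiv ℝ f)) := (hsupp.fderiv ℝ).fderiv ℝ
  set L : R3 → ℝ≥0∞ :=
    fun x => ∫⁻ y : R3, (‖fderiv ℝ (fderiv ℝ f) y‖₊ : ℝ≥0∞) / (‖x - y‖₊ : ℝ≥0∞) with hL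
  -- the key pointwise inequality
  have hkey : ∀ x : R3, ENNReal.ofReal (4 * π) * ENNReal.ofReal ‖f x‖ ≤ L x := by
    intro x
    rw [show L x = ∫⁻ y : R3, (‖fderiv ℝ (fderiv ℝ f) y‖₊ : ℝ≥0∞) / (‖x - y‖₊ : ℝ≥0∞) from rfl]
    rw [sphere_decomp (fderiv ℝ (fderiv ℝ f)) hV x]
    calc ENNReal.ofReal (4 * π) * ENNReal.ofReal ‖f x‖
        = ∫⁻ _ : sphere (0:R3) 1, ENNReal.ofReal ‖f x‖ ∂(volume : Measure R3).toSphere := by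
          rw [lintegral_const, sphere_univ_eq, mul_comm]
      _ ≤ _ := by
          refine lintegral_mono fun ω => ?_
          exact ray_bound f hf hsupp x ω (mem_sphere_zero_iff_norm.mp ω.2)
  -- finiteness
  have hfin : ∀ x : R3, L x ≠ ⊤ := by
    intro x
    obtain ⟨B, hBlt, hB⟩ := radial_bound _ hV hVs x
    rw [show L x = ∫⁻ y : R3, (‖fderiv ℝ (fderiv ℝ f) y‖₊ : ℝ≥0∞) / (‖x - y‖₊ : ℝ≥0∞) from rfl]
    rw [sphere_decomp (fderiv ℝ (fderiv ℝ f)) hV x]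
    refine ne_of_lt (lt_of_le_of_lt (lintegral_mono fun ω =>
      hB ω (mem_sphere_zero_iff_norm.mp ω.2)) ?_)
    rw [lintegral_const, sphere_univ_eq]
    exact ENNReal.mul_lt_top hBlt ENNReal.ofReal_lt_top
  have h4pi : (0:ℝ) < 4 * π := by positivity
  constructor
  · -- real-integral form
    intro x
    set φ : R3 → ℝ := fun y => ‖fderiv ℝ (fderiv ℝ f) y‖ / ‖x - y‖ with hφ
    have hφmeas : Measurable φ := by
      refine Measurable.div ?_ ?_
      · exact (Continuous.norm (E := R3 →L[ℝ] R3 →L[ℝ] ℂ) hV).measurable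
      · exact (continuous_const.sub continuous_id).norm.measurable
    have hae : ∀ᵐ y : R3, ENNReal.ofReal (φ y)
        = (‖fderiv ℝ (fderiv ℝ f) y‖₊ : ℝ≥0∞) / (‖x - y‖₊ : ℝ≥0∞) := by
      filter_upwards [(Set.countable_singleton x).ae_notMem volume] with y hy
      have hyx : y ≠ x := by simpa using hy
      have hpos : (0:ℝ) < ‖x - y‖ := by
        rw [norm_pos_iff, sub_ne_zero]; exact fun h => hyx h.symm
      rw [hφ, ENNReal.ofReal_div_of_pos hpos, ofReal_norm_eq_coe_nnnorm (fderiv ℝ (fderiv ℝ f) y),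
        ofReal_norm_eq_coe_nnnorm]
    have hlint : ∫⁻ y : R3, ENNReal.ofReal (φ y) = L x := by
      rw [show L x = ∫⁻ y : R3, (‖fderiv ℝ (fderiv ℝ f) y‖₊ : ℝ≥0∞) / (‖x - y‖₊ : ℝ≥0∞) from rfl]
      exact lintegral_congr_ae hae
    have hnonneg : 0 ≤ᵐ[volume] φ := Filter.Eventually.of_forall fun y =>
      div_nonneg (norm_nonneg (fderiv ℝ (fderiv ℝ f) y)) (norm_nonneg _)
    have hint : ∫ y : R3, φ y = (L x).toReal := by
      rw [integral_eq_lintegral_of_nonneg_ae hnonneg hφmeas.aestronglyMeasurable, hlint]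
    have hle : 4 * π * ‖f x‖ ≤ (L x).toReal := by
      have h1 : ENNReal.ofReal (4 * π * ‖f x‖) ≤ L x := by
        rw [ENNReal.ofReal_mul h4pi.le]; exact hkey x
      have h2 := ENNReal.toReal_mono (hfin x) h1
      rwa [ENNReal.toReal_ofReal (by positivity)] at h2
    calc ‖f x‖ = 1 / (4 * π) * (4 * π * ‖f x‖) := by field_simp
      _ ≤ 1 / (4 * π) * (L x).toReal := by
          refine mul_le_mul_of_nonneg_left hle (by positivity)
      _ = 1 / (4 * π) * ∫ y : R3, φ y := by rw [hint]
  · -- Kato norm form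
    intro x
    have h1 : (∫⁻ y : R3, (‖fderiv ℝ (fderiv ℝ f) y‖₊ : ℝ≥0∞) / (‖y - x‖₊ : ℝ≥0∞)) = L x := by
      rw [show L x = ∫⁻ y : R3, (‖fderiv ℝ (fderiv ℝ f) y‖₊ : ℝ≥0∞) / (‖x - y‖₊ : ℝ≥0∞) from rfl]
      exact lintegral_congr fun y => by rw [show ‖y - x‖₊ = ‖x - y‖₊ from by
        rw [← nnnorm_neg, neg_sub]]
    have h2 : L x ≤ katoNorm (fun y => fderiv ℝ (fderiv ℝ f) y) := by
      rw [← h1]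
      exact le_iSup (fun y : R3 => ∫⁻ x' : R3,
        (‖fderiv ℝ (fderiv ℝ f) x'‖₊ : ℝ≥0∞) / (‖x' - y‖₊ : ℝ≥0∞)) x
    rw [← ofReal_norm_eq_coe_nnnorm, ← ENNReal.div_eq_inv_mul]
    rw [ENNReal.le_div_iff_mul_le (Or.inl (by simp [h4pi, pi_pos])) (Or.inl ENNReal.ofReal_ne_top)]
    calc ENNReal.ofReal ‖f x‖ * ENNReal.ofReal (4 * π)
        = ENNReal.ofReal (4 * π) * ENNReal.ofReal ‖f x‖ := mul_comm _ _
      _ ≤ L x := hkey x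
      _ ≤ _ := h2
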